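/- Let n ≥ 1, let 1 ≤ m < n, and let w, u be permutations of {1,2,…,n} with w →^{r_m} u. Then the maximum of the set {w(1), w(2), …, w(m)} ∪ {w(b) : m < b ≤ n and w(b) > u(b)} equals the maximum of {u(1), u(2), …, u(m)}. -/

import Mathlib

/-- The length (number of inversions) of a permutation of `Fin n`
(representing `{1,…,n}` with `i : Fin n` standing for `i+1`). -/
def invLength {n : ℕ} (w : Equiv.Perm (Fin n)) : ℕ :=
  (Finset.univ.filter fun p : Fin n × Fin n => p.1 < p.2 ∧ w p.2 < w p.1).card

/-- `w τ_{a₁b₁} ⋯ τ_{aₛbₛ}` for the list of pairs `L = [(a₁,b₁),…,(aₛ,bₛ)]`. -/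
def chainProd {n : ℕ} (w : Equiv.Perm (Fin n)) (L : List (Fin n × Fin n)) :
    Equiv.Perm (Fin n) :=
  w * (L.map fun p => Equiv.swap p.1 p.2).prod

/-- The list `L = [(a₁,b₁),…,(aₛ,bₛ)]` is a chain witnessing `w ≤ₘ u`:
each `aᵢ ≤ m < bᵢ` (in 1-indexed terms, i.e. `(aᵢ : ℕ) < m ≤ (bᵢ : ℕ)` in 0-indexed `Fin n`),
`u = w τ_{a₁b₁} ⋯ τ_{aₛbₛ}`, and `ℓ(w τ_{a₁b₁} ⋯ τ_{aᵢbᵢ}) = ℓ(w) + i` for all `i ≤ s`. -/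
def IsMChain {n : ℕ} (m : ℕ) (w u : Equiv.Perm (Fin n)) (L : List (Fin n × Fin n)) : Prop :=
  (∀ p ∈ L, (p.1 : ℕ) < m ∧ m ≤ (p.2 : ℕ)) ∧
  u = chainProd w L ∧
  ∀ i, i ≤ L.length → invLength (chainProd w (L.take i)) = invLength w + i

/-- The `m`-Bruhat order `w ≤ₘ u`. -/
def mBruhat {n : ℕ} (m : ℕ) (w u : Equiv.Perm (Fin n)) : Prop :=
  ∃ L, IsMChain m w u L

/-- `w →^{r_m} u` : as `w ≤ₘ u`, with the `bᵢ` pairwise distinct. -/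
def rmRel {n : ℕ} (m : ℕ) (w u : Equiv.Perm (Fin n)) : Prop :=
  ∃ L, IsMChain m w u L ∧ (L.map Prod.snd).Nodup


open Equiv Finset in
lemma invLength_swap_lt {n : ℕ} (v : Equiv.Perm (Fin n)) (a b : Fin n)
    (hab : a < b) (hv : v a < v b) :
    invLength v + 1 ≤ invLength (v * Equiv.swap a b) := by
  classical
  set S : Finset (Fin n × Fin n) :=
    Finset.univ.filter (fun p : Fin n × Fin n => p.1 < p.2 ∧ v p.2 < v p.1) with hS
  set S' : Finset (Fin n × Fin n) :=
    Finset.univ.filter (fun p : Fin n × Fin n =>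
      p.1 < p.2 ∧ (v * Equiv.swap a b) p.2 < (v * Equiv.swap a b) p.1) with hS'
  have hab' : (a, b) ∉ S := by
    simp [hS, not_lt.2 (le_of_lt hv)]
  have key : (insert (a, b) S).card ≤ S'.card := by
    set F : Fin n × Fin n → Fin n × Fin n := fun p =>
      if (p.1 = a ∧ p.2 ≤ b) ∨ (p.2 = b ∧ a ≤ p.1) then p
      else (Equiv.swap a b p.1, Equiv.swap a b p.2) with hF
    apply Finset.card_le_card_of_injOn F
    · -- maps to
      intro p hp
      have hp1 : p.1 < p.2 ∧ (p = (a, b) ∨ v p.2 < v p.1) := by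
        rcases Finset.mem_insert.1 hp with h | h
        · subst h; exact ⟨hab, Or.inl rfl⟩
        · simp only [hS, Finset.mem_filter] at h
          exact ⟨h.2.1, Or.inr h.2.2⟩
      obtain ⟨hord, hinv⟩ := hp1
      simp only [hS', Finset.mem_coe, Finset.mem_filter, Finset.mem_univ, true_and]
      by_cases hC : (p.1 = a ∧ p.2 ≤ b) ∨ (p.2 = b ∧ a ≤ p.1)
      · rw [hF]; simp only [if_pos hC]
        refine ⟨hord, ?_⟩
        simp only [Equiv.Perm.mul_apply]
        rcases hC with ⟨h1, h2⟩ | ⟨h1, h2⟩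
        · -- p.1 = a, p.2 ≤ b
          rcases eq_or_lt_of_le h2 with hb | hb
          · rw [h1, hb, Equiv.swap_apply_left, Equiv.swap_apply_right]
            exact hv
          · have hinv' : v p.2 < v p.1 := by
              rcases hinv with h | h
              · exact absurd (congrArg Prod.snd h) (by simpa using ne_of_lt hb)
              · exact h
            have h2a : p.2 ≠ a := ne_of_gt (h1 ▸ hord)
            have h2b : p.2 ≠ b := ne_of_lt hb
            rw [h1, Equiv.swap_apply_left, Equiv.swap_apply_of_ne_of_ne h2a h2b]
            exact lt_trans (h1 ▸ hinv') hv
        · -- p.2 = b, a ≤ p.1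
          rcases eq_or_lt_of_le h2 with ha | ha
          · rw [h1, ← ha, Equiv.swap_apply_left, Equiv.swap_apply_right]
            exact hv
          · have hinv' : v p.2 < v p.1 := by
              rcases hinv with h | h
              · exact absurd (congrArg Prod.fst h) (by simpa using (ne_of_gt ha))
              · exact h
            have h1a : p.1 ≠ a := ne_of_gt ha
            have h1b : p.1 ≠ b := ne_of_lt (h1 ▸ hord)
            rw [h1, Equiv.swap_apply_right, Equiv.swap_apply_of_ne_of_ne h1a h1b]
            exact lt_trans hv (h1 ▸ hinv')
      · rw [hF]; simp only [if_neg hC]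
        push_neg at hC
        obtain ⟨hC1, hC2⟩ := hC
        have hpab : p ≠ (a, b) := by
          rintro rfl; exact lt_irrefl b (hC1 rfl)
        have hinv' : v p.2 < v p.1 := hinv.resolve_left hpab
        refine ⟨?_, ?_⟩
        · -- swap a b p.1 < swap a b p.2
          rcases eq_or_ne p.1 a with h1a | h1a
          · have hb2 : b < p.2 := hC1 h1a
            rw [h1a, Equiv.swap_apply_left,
              Equiv.swap_apply_of_ne_of_ne (ne_of_gt (lt_trans hab hb2)) (ne_of_gt hb2)]
            exact hb2
          rcases eq_or_ne p.1 b with h1b | h1b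
          · have hb2 : b < p.2 := h1b ▸ hord
            rw [h1b, Equiv.swap_apply_right,
              Equiv.swap_apply_of_ne_of_ne (ne_of_gt (lt_trans hab hb2)) (ne_of_gt hb2)]
            exact lt_trans hab hb2
          rcases eq_or_ne p.2 a with h2a | h2a
          · have h1lt : p.1 < a := h2a ▸ hord
            rw [Equiv.swap_apply_of_ne_of_ne h1a h1b, h2a, Equiv.swap_apply_left]
            exact lt_trans h1lt hab
          rcases eq_or_ne p.2 b with h2b | h2b
          · have h1lt : p.1 < a := hC2 h2b
            rw [Equiv.swap_apply_of_ne_of_ne h1a h1b, h2b, Equiv.swap_apply_right]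
            exact h1lt
          · rw [Equiv.swap_apply_of_ne_of_ne h1a h1b, Equiv.swap_apply_of_ne_of_ne h2a h2b]
            exact hord
        · simp only [Equiv.Perm.mul_apply, Equiv.swap_apply_self]
          exact hinv'
    · -- injOn
      intro p hp q hq hFpq
      have hpord : p.1 < p.2 := by
        rcases Finset.mem_insert.1 (by exact_mod_cast hp) with h | h
        · subst h; exact hab
        · exact (Finset.mem_filter.1 h).2.1
      have hqord : q.1 < q.2 := by
        rcases Finset.mem_insert.1 (by exact_mod_cast hq) with h | h
        · subst h; exact hab
        · exact (Finset.mem_filter.1 h).2.1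
      -- key: branch-images disjoint
      have himage : ∀ r : Fin n × Fin n, r.1 < r.2 →
          ¬((r.1 = a ∧ r.2 ≤ b) ∨ (r.2 = b ∧ a ≤ r.1)) →
          ¬(((Equiv.swap a b r.1) = a ∧ (Equiv.swap a b r.2) ≤ b) ∨
            ((Equiv.swap a b r.2) = b ∧ a ≤ (Equiv.swap a b r.1))) := by
        intro r hrord hrC
        push_neg at hrC
        obtain ⟨hC1, hC2⟩ := hrC
        rintro (⟨e1, e2⟩ | ⟨e1, e2⟩)
        · -- swap r.1 = a ⇒ r.1 = b
          have hr1 : r.1 = b := by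
            have := congrArg (Equiv.swap a b) e1
            simpa [Equiv.swap_apply_self, Equiv.swap_apply_left] using this
          have hb2 : b < r.2 := hr1 ▸ hrord
          have : Equiv.swap a b r.2 = r.2 :=
            Equiv.swap_apply_of_ne_of_ne (ne_of_gt (lt_trans hab hb2)) (ne_of_gt hb2)
          rw [this] at e2
          exact absurd e2 (not_le.2 hb2)
        · -- swap r.2 = b ⇒ r.2 = a
          have hr2 : r.2 = a := by
            have := congrArg (Equiv.swap a b) e1
            simpa [Equiv.swap_apply_self, Equiv.swap_apply_right] using this
          have h1lt : r.1 < a := hr2 ▸ hrord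
          have : Equiv.swap a b r.1 = r.1 :=
            Equiv.swap_apply_of_ne_of_ne (ne_of_lt h1lt) (ne_of_lt (lt_trans h1lt hab))
          rw [this] at e2
          exact absurd e2 (not_le.2 h1lt)
      by_cases hCp : (p.1 = a ∧ p.2 ≤ b) ∨ (p.2 = b ∧ a ≤ p.1) <;>
        by_cases hCq : (q.1 = a ∧ q.2 ≤ b) ∨ (q.2 = b ∧ a ≤ q.1)
      · rw [hF] at hFpq; simpa [if_pos hCp, if_pos hCq] using hFpq
      · exfalso
        rw [hF] at hFpq; simp only [if_pos hCp, if_neg hCq] at hFpq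
        rw [hFpq] at hCp
        exact himage q hqord hCq (by simpa using hCp)
      · exfalso
        rw [hF] at hFpq; simp only [if_neg hCp, if_pos hCq] at hFpq
        rw [← hFpq] at hCq
        exact himage p hpord hCp (by simpa using hCq)
      · rw [hF] at hFpq; simp only [if_neg hCp, if_neg hCq] at hFpq
        have e1 : Equiv.swap a b p.1 = Equiv.swap a b q.1 := congrArg Prod.fst hFpq
        have e2 : Equiv.swap a b p.2 = Equiv.swap a b q.2 := congrArg Prod.snd hFpq
        exact Prod.ext ((Equiv.swap a b).injective e1) ((Equiv.swap a b).injective e2)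
  calc invLength v + 1 = (insert (a, b) S).card := by
        rw [Finset.card_insert_of_notMem hab']; rfl
    _ ≤ S'.card := key
    _ = invLength (v * Equiv.swap a b) := rfl

lemma swap_inc_val {n : ℕ} (v : Equiv.Perm (Fin n)) (a b : Fin n) (hab : a < b)
    (h : invLength (v * Equiv.swap a b) = invLength v + 1) : v a < v b := by
  rcases lt_trichotomy (v a) (v b) with h' | h' | h'
  · exact h'
  · exact absurd (v.injective h') (ne_of_lt hab)
  · exfalso
    set v' := v * Equiv.swap a b with hv'
    have h1 : v' a = v b := by simp [hv', Equiv.swap_apply_left]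
    have h2 : v' b = v a := by simp [hv', Equiv.swap_apply_right]
    have := invLength_swap_lt v' a b hab (by rw [h1, h2]; exact h')
    have hvv : v' * Equiv.swap a b = v := by
      rw [hv', mul_assoc, Equiv.swap_mul_self, mul_one]
    rw [hvv, h] at this
    omega

lemma chainProd_nil {n : ℕ} (w : Equiv.Perm (Fin n)) : chainProd w [] = w := by
  simp [chainProd]

lemma chainProd_cons {n : ℕ} (w : Equiv.Perm (Fin n)) (p : Fin n × Fin n)
    (L : List (Fin n × Fin n)) :
    chainProd w (p :: L) = chainProd (w * Equiv.swap p.1 p.2) L := by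
  simp [chainProd, mul_assoc]

lemma isMChain_cons {n m : ℕ} {w u : Equiv.Perm (Fin n)} {p : Fin n × Fin n}
    {L : List (Fin n × Fin n)} (h : IsMChain m w u (p :: L)) :
    IsMChain m (w * Equiv.swap p.1 p.2) u L ∧ w p.1 < w p.2 := by
  obtain ⟨h1, h2, h3⟩ := h
  have hp : (p.1 : ℕ) < m ∧ m ≤ (p.2 : ℕ) := h1 p List.mem_cons_self
  have hp12 : p.1 < p.2 := by rw [Fin.lt_def]; omega
  have hlen1 : invLength (w * Equiv.swap p.1 p.2) = invLength w + 1 := by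
    have := h3 1 (by simp)
    simpa [chainProd] using this
  have hchain : IsMChain m (w * Equiv.swap p.1 p.2) u L := by
    refine ⟨fun q hq => h1 q (List.mem_cons_of_mem p hq), by rw [h2, chainProd_cons], ?_⟩
    intro i hi
    have := h3 (i + 1) (by simpa using Nat.succ_le_succ hi)
    rw [List.take_succ_cons, chainProd_cons] at this
    omega
  exact ⟨hchain, swap_inc_val w p.1 p.2 hp12 hlen1⟩

lemma chain_untouched {n m : ℕ} : ∀ (L : List (Fin n × Fin n)) (w u : Equiv.Perm (Fin n)),
    IsMChain m w u L → ∀ b : Fin n, m ≤ (b : ℕ) → b ∉ L.map Prod.snd → u b = w b := by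
  intro L
  induction L with
  | nil => intro w u h b _ _; rw [h.2.1, chainProd_nil]
  | cons p L IH =>
    intro w u h b hb hbn
    obtain ⟨hchain, _⟩ := isMChain_cons h
    have hbn' : b ≠ p.2 ∧ b ∉ L.map Prod.snd := by
      simp only [List.map_cons, List.mem_cons] at hbn
      push_neg at hbn; exact hbn
    have hp : (p.1 : ℕ) < m ∧ m ≤ (p.2 : ℕ) := h.1 p List.mem_cons_self
    have hba : b ≠ p.1 := by
      intro e; rw [e] at hb; omega
    rw [IH _ u hchain b hb hbn'.2]
    simp [Equiv.Perm.mul_apply, Equiv.swap_apply_of_ne_of_ne hba hbn'.1]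

lemma chain_mem_m {n m : ℕ} {L : List (Fin n × Fin n)} {w u : Equiv.Perm (Fin n)}
    (h : IsMChain m w u L) {b : Fin n} (hb : b ∈ L.map Prod.snd) : m ≤ (b : ℕ) := by
  obtain ⟨q, hq, rfl⟩ := List.mem_map.1 hb
  exact (h.1 q hq).2

lemma chain_used_lt {n m : ℕ} : ∀ (L : List (Fin n × Fin n)) (w u : Equiv.Perm (Fin n)),
    IsMChain m w u L → (L.map Prod.snd).Nodup →
    ∀ b ∈ L.map Prod.snd, u b < w b := by
  intro L
  induction L with
  | nil => intro w u _ _ b hb; simp at hb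
  | cons p L IH =>
    intro w u h hnd b hb
    obtain ⟨hchain, hlt⟩ := isMChain_cons h
    have hp : (p.1 : ℕ) < m ∧ m ≤ (p.2 : ℕ) := h.1 p List.mem_cons_self
    simp only [List.map_cons, List.nodup_cons] at hnd
    simp only [List.map_cons, List.mem_cons] at hb
    rcases hb with rfl | hb
    · -- b = p.2
      have := chain_untouched L _ u hchain p.2 hp.2 hnd.1
      rw [this]
      simpa [Equiv.Perm.mul_apply, Equiv.swap_apply_right] using hlt
    · have hbm : m ≤ (b : ℕ) := chain_mem_m hchain hb
      have hba : b ≠ p.1 := by intro e; rw [e] at hbm; omega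
      have hbb : b ≠ p.2 := by intro e; rw [e] at hb; exact hnd.1 hb
      have := IH _ u hchain hnd.2 b hb
      rwa [show (w * Equiv.swap p.1 p.2) b = w b by
        simp [Equiv.Perm.mul_apply, Equiv.swap_apply_of_ne_of_ne hba hbb]] at this

lemma chain_value_src {n m : ℕ} : ∀ (L : List (Fin n × Fin n)) (w u : Equiv.Perm (Fin n)),
    IsMChain m w u L → (L.map Prod.snd).Nodup →
    ∀ a : Fin n, (a : ℕ) < m →
      (∃ c : Fin n, (c : ℕ) < m ∧ u a = w c) ∨ (∃ b ∈ L.map Prod.snd, u a = w b) := by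
  intro L
  induction L with
  | nil =>
    intro w u h _ a ha
    rw [h.2.1, chainProd_nil]
    exact Or.inl ⟨a, ha, rfl⟩
  | cons p L IH =>
    intro w u h hnd a ha
    obtain ⟨hchain, hlt⟩ := isMChain_cons h
    simp only [List.map_cons, List.nodup_cons] at hnd
    have hp : (p.1 : ℕ) < m ∧ m ≤ (p.2 : ℕ) := h.1 p List.mem_cons_self
    rcases IH _ u hchain hnd.2 a ha with ⟨c, hc, hcv⟩ | ⟨b, hb, hbv⟩
    · by_cases hcp : c = p.1
      · refine Or.inr ⟨p.2, by simp, ?_⟩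
        rw [hcv, hcp]
        simp [Equiv.Perm.mul_apply, Equiv.swap_apply_left]
      · refine Or.inl ⟨c, hc, ?_⟩
        rw [hcv]
        have hcb : c ≠ p.2 := by intro e; rw [e] at hc; omega
        simp [Equiv.Perm.mul_apply, Equiv.swap_apply_of_ne_of_ne hcp hcb]
    · have hbm : m ≤ (b : ℕ) := chain_mem_m hchain hb
      have hba : b ≠ p.1 := by intro e; rw [e] at hbm; omega
      have hbb : b ≠ p.2 := by intro e; rw [e] at hb; exact hnd.1 hb
      refine Or.inr ⟨b, by simp [hb], ?_⟩
      rw [hbv]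
      simp [Equiv.Perm.mul_apply, Equiv.swap_apply_of_ne_of_ne hba hbb]

lemma chain_le_final {n m : ℕ} : ∀ (L : List (Fin n × Fin n)) (w u : Equiv.Perm (Fin n)),
    IsMChain m w u L → (L.map Prod.snd).Nodup →
    ∀ x : Fin n,
      ((∃ c : Fin n, (c : ℕ) < m ∧ x = w c) ∨ (∃ b ∈ L.map Prod.snd, x = w b)) →
      ∃ a : Fin n, (a : ℕ) < m ∧ x ≤ u a := by
  intro L
  induction L with
  | nil =>
    intro w u h _ x hx
    rw [h.2.1, chainProd_nil]
    rcases hx with ⟨c, hc, rfl⟩ | ⟨b, hb, _⟩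
    · exact ⟨c, hc, le_rfl⟩
    · simp at hb
  | cons p L IH =>
    intro w u h hnd x hx
    obtain ⟨hchain, hlt⟩ := isMChain_cons h
    simp only [List.map_cons, List.nodup_cons] at hnd
    have hp : (p.1 : ℕ) < m ∧ m ≤ (p.2 : ℕ) := h.1 p List.mem_cons_self
    set w' := w * Equiv.swap p.1 p.2 with hw'
    have hwp1 : w' p.1 = w p.2 := by simp [hw', Equiv.Perm.mul_apply, Equiv.swap_apply_left]
    rcases hx with ⟨c, hc, rfl⟩ | ⟨b, hb, rfl⟩
    · by_cases hcp : c = p.1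
      · -- x = w p.1 < w p.2 = w' p.1
        obtain ⟨a, ham, hle⟩ := IH _ u hchain hnd.2 (w' p.1) (Or.inl ⟨p.1, hp.1, rfl⟩)
        exact ⟨a, ham, le_of_lt (lt_of_lt_of_le (by rw [hwp1, hcp]; exact hlt) hle)⟩
      · have hcb : c ≠ p.2 := by intro e; rw [e] at hc; omega
        have : w c = w' c := by
          simp [hw', Equiv.Perm.mul_apply, Equiv.swap_apply_of_ne_of_ne hcp hcb]
        rw [this]
        exact IH _ u hchain hnd.2 (w' c) (Or.inl ⟨c, hc, rfl⟩)
    · simp only [List.map_cons, List.mem_cons] at hb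
      rcases hb with rfl | hb
      · rw [← hwp1]
        exact IH _ u hchain hnd.2 (w' p.1) (Or.inl ⟨p.1, hp.1, rfl⟩)
      · have hbm : m ≤ (b : ℕ) := chain_mem_m hchain hb
        have hba : b ≠ p.1 := by intro e; rw [e] at hbm; omega
        have hbb : b ≠ p.2 := by intro e; rw [e] at hb; exact hnd.1 hb
        have : w b = w' b := by
          simp [hw', Equiv.Perm.mul_apply, Equiv.swap_apply_of_ne_of_ne hba hbb]
        rw [this]
        exact IH _ u hchain hnd.2 (w' b) (Or.inr ⟨b, hb, rfl⟩)

/-- if `w →^{r_m} u` then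
`max ({w(1),…,w(m)} ∪ {w(b) : m < b ≤ n, w(b) > u(b)}) = max {u(1),…,u(m)}`. -/
theorem stmt7 (n m : ℕ) (hn : 1 ≤ n) (hm : 1 ≤ m) (hmn : m < n)
    (w u : Equiv.Perm (Fin n)) (h : rmRel m w u) :
    ((Finset.univ.filter fun a : Fin n => (a : ℕ) < m).image w ∪
      (Finset.univ.filter fun b : Fin n => m ≤ (b : ℕ) ∧ u b < w b).image w).max
      = ((Finset.univ.filter fun a : Fin n => (a : ℕ) < m).image u).max := by
  classical
  obtain ⟨L, hchain, hnd⟩ := h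
  apply le_antisymm
  · apply Finset.max_le
    intro x hx
    have hx' : (∃ c : Fin n, (c : ℕ) < m ∧ x = w c) ∨ (∃ b ∈ L.map Prod.snd, x = w b) := by
      rcases Finset.mem_union.1 hx with hx | hx
      · obtain ⟨c, hc, rfl⟩ := Finset.mem_image.1 hx
        exact Or.inl ⟨c, (Finset.mem_filter.1 hc).2, rfl⟩
      · obtain ⟨b, hb, rfl⟩ := Finset.mem_image.1 hx
        have hb' := (Finset.mem_filter.1 hb).2
        refine Or.inr ⟨b, ?_, rfl⟩
        by_contra hbn
        exact absurd (chain_untouched L w u hchain b hb'.1 hbn) (ne_of_lt hb'.2)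
    obtain ⟨a, ham, hle⟩ := chain_le_final L w u hchain hnd x hx'
    calc (x : WithBot (Fin n)) ≤ (u a : WithBot (Fin n)) := WithBot.coe_le_coe.2 hle
      _ ≤ _ := Finset.le_max (Finset.mem_image.2
          ⟨a, Finset.mem_filter.2 ⟨Finset.mem_univ a, ham⟩, rfl⟩)
  · apply Finset.max_mono
    intro x hx
    obtain ⟨a, ha, rfl⟩ := Finset.mem_image.1 hx
    have ham := (Finset.mem_filter.1 ha).2
    rcases chain_value_src L w u hchain hnd a ham with ⟨c, hc, hv⟩ | ⟨b, hb, hv⟩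
    · exact Finset.mem_union_left _ (Finset.mem_image.2
        ⟨c, Finset.mem_filter.2 ⟨Finset.mem_univ c, hc⟩, hv.symm⟩)
    · refine Finset.mem_union_right _ (Finset.mem_image.2
        ⟨b, Finset.mem_filter.2 ⟨Finset.mem_univ b, chain_mem_m hchain hb, ?_⟩, hv.symm⟩)
      rw [← hv]
      exact hv ▸ chain_used_lt L w u hchain hnd b hb
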